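/- Let Y be a finitely generated free ℤ₂-module equipped with a ℤ₂-linear automorphism σ satisfying σ² = id, and suppose that the quotient Y/(σ−1)Y is isomorphic as an abelian group to (ℤ/2ℤ)^r for some integer r ≥ 0. Then Y is a free ℤ₂-module of rank exactly r, i.e., Y ≅ ℤ₂^r. -/

import Mathlib

set_option maxHeartbeats 1000000
set_option synthInstance.maxHeartbeats 2000000


/-- Let `Y` be a finitely generated free `ℤ₂`-module with a `ℤ₂`-linear automorphism `σ`
satisfying `σ² = 1`, and suppose `Y/(σ-1)Y ≅ (ℤ/2ℤ)^r` as abelian groups. Then `Y` is a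
free `ℤ₂`-module of rank exactly `r`, i.e. `Y ≅ ℤ₂^r`. -/
theorem stmt2 (Y : Type*) [AddCommGroup Y] [Module ℤ_[2] Y]
    [Module.Free ℤ_[2] Y] [Module.Finite ℤ_[2] Y]
    (σ : Module.End ℤ_[2] Y) (hbij : Function.Bijective σ) (hord : σ ^ 2 = 1)
    (r : ℕ)
    (hquot : Nonempty ((Y ⧸ LinearMap.range (σ - 1)) ≃+ (Fin r → ZMod 2))) :
    Nonempty (Y ≃ₗ[ℤ_[2]] (Fin r → ℤ_[2])) := by
  obtain ⟨f⟩ := hquot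
  set n := Module.finrank ℤ_[2] Y with hn
  let b : Module.Basis (Fin n) ℤ_[2] Y := Module.finBasis ℤ_[2] Y
  let e : Y ≃ₗ[ℤ_[2]] (Fin n → ℤ_[2]) := b.equivFun
  -- the quotient is killed by 2
  have h2 : ∀ y : Y, (2 : ℤ_[2]) • y ∈ LinearMap.range (σ - 1) := by
    intro y
    rw [← Submodule.Quotient.mk_eq_zero]
    have hz : ∀ x : ZMod 2, x + x = 0 := by decide
    have hf : f (Submodule.Quotient.mk y + Submodule.Quotient.mk y) = 0 := by
      rw [map_add]; funext i; exact hz (f (Submodule.Quotient.mk y) i)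
    have h0 : (Submodule.Quotient.mk y + Submodule.Quotient.mk y :
        Y ⧸ LinearMap.range (σ - 1)) = 0 := by
      apply f.injective; rw [hf, map_zero]
    calc (Submodule.Quotient.mk ((2 : ℤ_[2]) • y) : Y ⧸ LinearMap.range (σ - 1))
        = (2 : ℤ_[2]) • Submodule.Quotient.mk y := by rw [Submodule.Quotient.mk_smul]
      _ = Submodule.Quotient.mk y + Submodule.Quotient.mk y := by
          rw [show (2 : ℤ_[2]) = 1 + 1 by norm_num, add_smul, one_smul]
      _ = 0 := h0
  -- σ acts as -1 on the range of σ - 1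
  have hneg : ∀ y : Y, σ ((σ - 1) y) = -((σ - 1) y) := by
    intro y
    have h : (σ + 1) * (σ - 1) = 0 := by
      have h' : (σ + 1) * (σ - 1) = σ ^ 2 - 1 := by noncomm_ring
      rw [h', hord, sub_self]
    have h2' := congrArg (fun g : Module.End ℤ_[2] Y => g y) h
    simp only [Module.End.mul_apply, LinearMap.add_apply, Module.End.one_apply,
      LinearMap.zero_apply] at h2'
    exact eq_neg_of_add_eq_zero_left h2'
  -- hence σ = -1 on all of Y
  have hsigma : ∀ y : Y, σ y = -y := by
    intro y
    obtain ⟨x, hx⟩ := h2 y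
    have hs : σ ((2 : ℤ_[2]) • y) = -((2 : ℤ_[2]) • y) := by
      rw [← hx]; exact hneg x
    have : (2 : ℤ_[2]) • (σ y + y) = 0 := by
      rw [smul_add, ← map_smul, hs]
      abel
    have h20 : (2 : ℤ_[2]) ≠ 0 := two_ne_zero
    rcases smul_eq_zero.mp this with h | h
    · exact absurd h h20
    · exact eq_neg_of_add_eq_zero_left h
  have hval : ∀ y : Y, (σ - 1) y = (-2 : ℤ_[2]) • y := by
    intro y
    rw [LinearMap.sub_apply, Module.End.one_apply, hsigma y,
      show (-2 : ℤ_[2]) = -(1 + 1) by norm_num, neg_smul, add_smul, one_smul]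
    abel
  -- identify the range of σ - 1 under the coordinate equivalence
  have hmap : (LinearMap.range (σ - 1)).map (e : Y →ₗ[ℤ_[2]] (Fin n → ℤ_[2]))
      = Submodule.pi Set.univ (fun _ : Fin n => (Ideal.span {(2 : ℤ_[2])} :
          Submodule ℤ_[2] ℤ_[2])) := by
    ext x
    simp only [Submodule.mem_map, LinearMap.mem_range, Submodule.mem_pi, Set.mem_univ,
      forall_true_left]
    constructor
    · rintro ⟨-, ⟨y, rfl⟩, rfl⟩ i
      rw [hval, map_smul, Ideal.mem_span_singleton]
      exact ⟨-(e y i), by simp [smul_eq_mul]⟩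
    · intro hx
      choose c hc using fun i => Ideal.mem_span_singleton.mp (hx i)
      refine ⟨(σ - 1) (e.symm (fun i => -(c i))), ⟨e.symm (fun i => -(c i)), rfl⟩, ?_⟩
      rw [hval, map_smul]
      simp only [LinearEquiv.coe_coe, LinearEquiv.apply_symm_apply]
      funext i
      simp only [Pi.smul_apply, smul_eq_mul]
      rw [hc i]; ring
  -- transport the quotient through the equivalence
  let q1 : (Y ⧸ LinearMap.range (σ - 1)) ≃ₗ[ℤ_[2]]
      ((Fin n → ℤ_[2]) ⧸ Submodule.pi Set.univ (fun _ : Fin n =>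
        (Ideal.span {(2 : ℤ_[2])} : Submodule ℤ_[2] ℤ_[2]))) :=
    Submodule.Quotient.equiv _ _ e hmap
  let q2 := Submodule.quotientPi (ι := Fin n) (Ms := fun _ => ℤ_[2])
    (fun _ => (Ideal.span {(2 : ℤ_[2])} : Submodule ℤ_[2] ℤ_[2]))
  -- the residue ring is ZMod 2
  have hker : RingHom.ker (PadicInt.toZMod : ℤ_[2] →+* ZMod 2)
      = Ideal.span {(2 : ℤ_[2])} := by
    rw [PadicInt.ker_toZMod, PadicInt.maximalIdeal_eq_span_p]
    norm_num
  have hsurj : Function.Surjective (PadicInt.toZMod : ℤ_[2] →+* ZMod 2) := by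
    intro z
    have hz : z = 0 ∨ z = 1 := by revert z; decide
    rcases hz with rfl | rfl
    · exact ⟨0, map_zero _⟩
    · exact ⟨1, map_one _⟩
  let q3 : (ℤ_[2] ⧸ (Ideal.span {(2 : ℤ_[2])} : Ideal ℤ_[2])) ≃+* ZMod 2 :=
    (Ideal.quotEquivOfEq hker.symm).trans (RingHom.quotientKerEquivOfSurjective hsurj)
  -- combine into an AddEquiv (Fin n → ZMod 2) ≃+ (Fin r → ZMod 2)
  let q4 : (Fin n → (ℤ_[2] ⧸ (Ideal.span {(2 : ℤ_[2])} : Ideal ℤ_[2]))) ≃+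
      (Fin n → ZMod 2) :=
    AddEquiv.piCongrRight (fun _ => q3.toAddEquiv)
  have E2 : ((Fin n → ℤ_[2]) ⧸ Submodule.pi Set.univ (fun _ : Fin n =>
        (Ideal.span {(2 : ℤ_[2])} : Submodule ℤ_[2] ℤ_[2]))) ≃+
      (Fin n → (ℤ_[2] ⧸ (Ideal.span {(2 : ℤ_[2])} : Ideal ℤ_[2]))) :=
    q2.toAddEquiv
  let E : (Y ⧸ LinearMap.range (σ - 1)) ≃+ (Fin n → ZMod 2) :=
    q1.toAddEquiv.trans (E2.trans q4)
  let g : (Fin n → ZMod 2) ≃+ (Fin r → ZMod 2) := E.symm.trans f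
  have hcard : (2 : ℕ) ^ n = 2 ^ r := by
    have := Nat.card_congr g.toEquiv
    simpa [Nat.card_eq_fintype_card] using this
  have hnr : n = r := Nat.pow_right_injective (le_refl 2) hcard
  exact ⟨hnr ▸ e⟩
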